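/- For all m ≥ 1 and k ≥ 1, the number of walks of length k between two fixed distinct vertices of the complete graph K_{m+1} equals (m^k + (-1)^{k-1})/(m+1); that is, for i ≠ j, the (i,j) entry of the k-th power of the adjacency matrix of K_{m+1} is (m^k − (−1)^k)/(m+1). In particular, for m ≥ 2 this number equals the minimum propagating-set cardinality of the balanced m-ary tree with k levels: (A(K_{m+1})^k)_{i,j} = π(T_{m,k}) where T_{m,k} is the balanced m-ary tree with (m^k − 1)/(m − 1) vertices. -/

import Mathlib

/-- The propagation closure: `PropReach G S v` means vertex `v` eventually receives the
information when the process starts from the set `S` on the graph `G`.  A vertex `w` can be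
added whenever some vertex `v` already having the information is adjacent to `w` and every
neighbour of `v` other than `w` already has the information. -/
inductive PropReach {V : Type*} (G : SimpleGraph V) (S : Set V) : V → Prop
  | base {v : V} (hv : v ∈ S) : PropReach G S v
  | step {v w : V} (hv : PropReach G S v) (hadj : G.Adj v w)
      (hall : ∀ x : V, G.Adj v x → x ≠ w → PropReach G S x) : PropReach G S w

/-- `S ↷ G` : the set `S` propagates to (all of) the graph `G`. -/
def Propagates {V : Type*} (G : SimpleGraph V) (S : Set V) : Prop :=
  ∀ v : V, PropReach G S v

/-- `π(G)`: the minimum cardinality of a set of vertices propagating to `G`. -/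
noncomputable def propNum {V : Type*} (G : SimpleGraph V) : ℕ :=
  sInf {n : ℕ | ∃ S : Set V, S.ncard = n ∧ Propagates G S}

/-- The balanced `m`-ary tree of depth `d`: vertices are words over an alphabet of
size `m` of length at most `d` (the root is the empty word), and each vertex `l` of
length `< d` is adjacent to its `m` children `x :: l`. -/
def BalancedTree (m d : ℕ) : SimpleGraph {l : List (Fin m) // l.length ≤ d} where
  Adj a b := (∃ x : Fin m, (a : List (Fin m)) = x :: (b : List (Fin m))) ∨
             (∃ x : Fin m, (b : List (Fin m)) = x :: (a : List (Fin m)))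
  symm := ⟨fun a b h => h.symm⟩
  loopless := ⟨by
    rintro a (⟨x, hx⟩ | ⟨x, hx⟩) <;> simpa using congrArg List.length hx⟩


namespace PropAux
variable {V : Type*} (G : SimpleGraph V)

def ValidSeq : Set V → List (V × V) → Prop
  | _, [] => True
  | P, q :: L => q.1 ∈ P ∧ q.2 ∉ P ∧ G.Adj q.1 q.2 ∧
      (∀ x, G.Adj q.1 x → x ≠ q.2 → x ∈ P) ∧ ValidSeq (insert q.2 P) L

variable {G}

lemma vs_snd_not_mem {P : Set V} {L : List (V × V)} (h : ValidSeq G P L) :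
    ∀ q ∈ L, q.2 ∉ P := by
  induction L generalizing P with
  | nil => simp
  | cons a L ih =>
    obtain ⟨h1, h2, h3, h4, h5⟩ := h
    intro q hq'
    rcases List.mem_cons.mp hq' with rfl | hq
    · exact h2
    · exact fun hqP => ih h5 q hq (Set.mem_insert_of_mem _ hqP)

lemma vs_adj {P : Set V} {L : List (V × V)} (h : ValidSeq G P L) :
    ∀ q ∈ L, G.Adj q.1 q.2 := by
  induction L generalizing P with
  | nil => simp
  | cons a L ih =>
    obtain ⟨h1, h2, h3, h4, h5⟩ := h
    intro q hq'
    rcases List.mem_cons.mp hq' with rfl | hq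
    · exact h3
    · exact ih h5 q hq

lemma vs_snd_nodup {P : Set V} {L : List (V × V)} (h : ValidSeq G P L) :
    (L.map Prod.snd).Nodup := by
  induction L generalizing P with
  | nil => simp
  | cons a L ih =>
    obtain ⟨h1, h2, h3, h4, h5⟩ := h
    refine List.nodup_cons.mpr ⟨?_, ih h5⟩
    intro hmem
    obtain ⟨q, hq, hq2⟩ := List.mem_map.mp hmem
    exact vs_snd_not_mem h5 q hq (hq2 ▸ Set.mem_insert _ _)

lemma vs_fst_nodup {P : Set V} {L : List (V × V)} (h : ValidSeq G P L) :
    (L.map Prod.fst).Nodup := by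
  induction L generalizing P with
  | nil => simp
  | cons a L ih =>
    obtain ⟨h1, h2, h3, h4, h5⟩ := h
    refine List.nodup_cons.mpr ⟨?_, ih h5⟩
    intro hmem
    obtain ⟨q, hq, hq1⟩ := List.mem_map.mp hmem
    have hq2 : q.2 ∉ insert a.2 P := vs_snd_not_mem h5 q hq
    have hadj : G.Adj a.1 q.2 := hq1 ▸ vs_adj h5 q hq
    have hne : q.2 ≠ a.2 := fun he => hq2 (he ▸ Set.mem_insert _ _)
    exact hq2 (Set.mem_insert_of_mem _ (h4 q.2 hadj hne))

lemma vs_no_rev {P : Set V} {L : List (V × V)} (h : ValidSeq G P L) :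
    ∀ q ∈ L, (q.2, q.1) ∉ L := by
  induction L generalizing P with
  | nil => simp
  | cons a L ih =>
    obtain ⟨h1, h2, h3, h4, h5⟩ := h
    intro q hq' hrev
    rcases List.mem_cons.mp hq' with rfl | hq
    · rcases List.mem_cons.mp hrev with heq | hmem
      · exact h2 (congrArg Prod.snd heq ▸ h1)
      · exact vs_snd_not_mem h5 _ hmem (Set.mem_insert_of_mem _ h1)
    · rcases List.mem_cons.mp hrev with heq | hmem
      · have : q.2 = a.1 := congrArg Prod.fst heq
        exact vs_snd_not_mem h5 q hq (Set.mem_insert_of_mem _ (this ▸ h1))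
      · exact ih h5 q hq hmem

lemma vs_nodup {P : Set V} {L : List (V × V)} (h : ValidSeq G P L) : L.Nodup :=
  (vs_snd_nodup h).of_map _

lemma reach_mem_of_closed {S P : Set V} (hSP : S ⊆ P)
    (hcl : ∀ v ∈ P, ∀ w, G.Adj v w → (∀ x, G.Adj v x → x ≠ w → x ∈ P) → w ∈ P) :
    ∀ v, PropReach G S v → v ∈ P := by
  intro v h
  induction h with
  | base hv => exact hSP hv
  | step hv hadj hall ihv ihall => exact hcl _ ihv _ hadj ihall

lemma exists_validSeq [Fintype V] {S : Set V} (hS : Propagates G S) :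
    ∃ L, ValidSeq G S L ∧ S ∪ {w | ∃ v, (v, w) ∈ L} = Set.univ := by
  classical
  suffices h : ∀ n (P : Set V), S ⊆ P → (Set.univ \ P).ncard ≤ n →
      ∃ L, ValidSeq G P L ∧ P ∪ {w | ∃ v, (v, w) ∈ L} = Set.univ by
    refine h (Fintype.card V) S subset_rfl ?_
    calc (Set.univ \ S).ncard ≤ (Set.univ : Set V).ncard :=
          Set.ncard_le_ncard (Set.subset_univ _) Set.finite_univ
      _ = Fintype.card V := by rw [Set.ncard_univ, Nat.card_eq_fintype_card]
  intro n
  induction n with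
  | zero =>
    intro P hSP hcard
    have hP : P = Set.univ := by
      have : (Set.univ \ P).ncard = 0 := Nat.le_zero.mp hcard
      have := (Set.ncard_eq_zero (Set.toFinite _)).mp this
      rw [Set.diff_eq_empty] at this
      exact Set.eq_univ_of_univ_subset this
    exact ⟨[], trivial, by simp [hP]⟩
  | succ n ih =>
    intro P hSP hcard
    by_cases hP : P = Set.univ
    · exact ⟨[], trivial, by simp [hP]⟩
    · have hne : (Set.univ \ P).Nonempty := by
        rw [Set.diff_nonempty]
        exact fun h => hP (Set.eq_univ_of_univ_subset h)
      have hnotcl : ¬ (∀ v ∈ P, ∀ w, G.Adj v w → (∀ x, G.Adj v x → x ≠ w → x ∈ P) → w ∈ P) := by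
        intro hcl
        obtain ⟨v, hv⟩ := hne
        exact hv.2 (reach_mem_of_closed hSP hcl v (hS v))
      push_neg at hnotcl
      obtain ⟨p, hp, w, hadj, hall, hw⟩ := hnotcl
      have hcard' : (Set.univ \ insert w P).ncard ≤ n := by
        have h1 : Set.univ \ insert w P = (Set.univ \ P) \ {w} := by
          ext x; simp [Set.mem_diff]; tauto
        have hwm : w ∈ Set.univ \ P := ⟨Set.mem_univ w, hw⟩
        rw [h1, Set.ncard_diff_singleton_of_mem hwm]
        omega
      obtain ⟨L', hvs', hcov'⟩ := ih (insert w P) (hSP.trans (Set.subset_insert _ _)) hcard'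
      refine ⟨(p, w) :: L', ?_, ?_⟩
      · exact ⟨hp, hw, hadj, hall, hvs'⟩
      · have heq : P ∪ {x | ∃ v, (v, x) ∈ (p, w) :: L'}
            = insert w P ∪ {x | ∃ v, (v, x) ∈ L'} := by
          ext x
          simp only [Set.mem_union, Set.mem_setOf_eq, List.mem_cons, Prod.mk.injEq,
            Set.mem_insert_iff]
          constructor
          · rintro (hx | ⟨v, (⟨rfl, rfl⟩ | hv)⟩)
            · exact Or.inl (Or.inr hx)
            · exact Or.inl (Or.inl rfl)
            · exact Or.inr ⟨v, hv⟩
          · rintro ((rfl | hx) | ⟨v, hv⟩)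
            · exact Or.inr ⟨p, Or.inl ⟨rfl, rfl⟩⟩
            · exact Or.inl hx
            · exact Or.inr ⟨v, Or.inr hv⟩
        rw [heq, hcov']


lemma lower_core [Fintype V] [DecidableEq V] {S : Set V} (hS : Propagates G S) :
    ∃ E : Finset (V × V),
      (∀ p ∈ E, G.Adj p.1 p.2) ∧
      (∀ x : V, (E.filter (fun p => p.1 = x)).card ≤ 1) ∧
      (∀ x : V, (E.filter (fun p => p.2 = x)).card ≤ 1) ∧
      (∀ p ∈ E, (p.2, p.1) ∉ E) ∧
      Fintype.card V = S.ncard + E.card := by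
  classical
  obtain ⟨L, hvs, hcov⟩ := exists_validSeq hS
  have hnodup : L.Nodup := vs_nodup hvs
  have hfst := vs_fst_nodup hvs
  have hsnd := vs_snd_nodup hvs
  refine ⟨L.toFinset, ?_, ?_, ?_, ?_, ?_⟩
  · intro p hp
    exact vs_adj hvs p (List.mem_toFinset.mp hp)
  · intro x
    rw [Finset.card_le_one]
    intro a ha b hb
    simp only [Finset.mem_filter, List.mem_toFinset] at ha hb
    exact List.inj_on_of_nodup_map hfst ha.1 hb.1 (ha.2.trans hb.2.symm)
  · intro x
    rw [Finset.card_le_one]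
    intro a ha b hb
    simp only [Finset.mem_filter, List.mem_toFinset] at ha hb
    exact List.inj_on_of_nodup_map hsnd ha.1 hb.1 (ha.2.trans hb.2.symm)
  · intro p hp hq
    exact vs_no_rev hvs p (List.mem_toFinset.mp hp) (List.mem_toFinset.mp hq)
  · have hdisj : Disjoint S {w | ∃ v, (v, w) ∈ L} := by
      rw [Set.disjoint_right]
      rintro w ⟨v, hv⟩ hwS
      exact vs_snd_not_mem hvs (v, w) hv hwS
    have hT : {w | ∃ v, (v, w) ∈ L} = ((L.map Prod.snd).toFinset : Set V) := by
      ext w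
      simp only [Set.mem_setOf_eq, Finset.coe_sort_coe, List.coe_toFinset, Set.mem_setOf_eq,
        List.mem_map]
      constructor
      · rintro ⟨v, hv⟩; exact ⟨(v, w), hv, rfl⟩
      · rintro ⟨q, hq, rfl⟩; exact ⟨q.1, hq⟩
    have hcard : (Fintype.card V : ℕ) = S.ncard + {w | ∃ v, (v, w) ∈ L}.ncard := by
      rw [← Set.ncard_union_eq hdisj (Set.toFinite _) (Set.toFinite _), hcov, Set.ncard_univ,
        Nat.card_eq_fintype_card]
    rw [hcard]
    congr 1
    rw [hT, Set.ncard_coe_finset, List.toFinset_card_of_nodup hsnd, List.length_map, ← List.toFinset_card_of_nodup hnodup]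

end PropAux


namespace PropAux

abbrev Vt (m d : ℕ) := {l : List (Fin m) // l.length ≤ d}

def emb (m d : ℕ) (x : Fin m) (u : Vt m d) : Vt m (d+1) :=
  ⟨u.val ++ [x], by simpa using Nat.succ_le_succ u.property⟩

lemma emb_injective (m d : ℕ) (x : Fin m) : Function.Injective (emb m d x) := by
  rintro ⟨u, hu⟩ ⟨v, hv⟩ h
  simpa [emb, Subtype.ext_iff] using h

def rt (m d : ℕ) : Vt m d := ⟨[], Nat.zero_le d⟩

def treeEquiv (m d : ℕ) : Option (Fin m × Vt m d) ≃ Vt m (d+1) where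
  toFun o := match o with
    | none => rt m (d+1)
    | some (x, u) => emb m d x u
  invFun v :=
    if h : v.val = [] then none
    else some (v.val.getLast h, ⟨v.val.dropLast, by
      have := v.property
      have hlen : v.val.dropLast.length = v.val.length - 1 := List.length_dropLast
      omega⟩)
  left_inv o := by
    match o with
    | none => simp [rt]
    | some (x, u) =>
      have hne : (u.val ++ [x] : List (Fin m)) ≠ [] := by simp
      show (if h : (u.val ++ [x] : List (Fin m)) = [] then none else _) = _
      rw [dif_neg hne]
      have h1 : (u.val ++ [x]).getLast hne = x := List.getLast_concat
      have h2 : (u.val ++ [x]).dropLast = u.val := List.dropLast_concat ..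
      exact congrArg some (Prod.ext h1 (Subtype.ext h2))
  right_inv v := by
    by_cases h : v.val = []
    · simp only [h, dif_pos]
      exact Subtype.ext h.symm
    · simp only [h, dif_neg]
      exact Subtype.ext (List.dropLast_append_getLast h)

def vtFintype (m : ℕ) : (d : ℕ) → Fintype (Vt m d)
  | 0 => Fintype.ofList [rt m 0] (by
      rintro ⟨l, hl⟩
      have : l = [] := List.length_eq_zero_iff.mp (Nat.le_zero.mp hl)
      simp [rt, this])
  | d+1 => letI := vtFintype m d; Fintype.ofEquiv _ (treeEquiv m d)

attribute [local instance] vtFintype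

lemma card_vt_succ (m d : ℕ) :
    Fintype.card (Vt m (d+1)) = m * Fintype.card (Vt m d) + 1 := by
  rw [← Fintype.card_congr (treeEquiv m d)]
  simp [Fintype.card_option, Fintype.card_prod, Nat.add_comm, Nat.mul_comm]

lemma card_vt_zero (m : ℕ) : Fintype.card (Vt m 0) = 1 := by
  rw [Fintype.card_eq_one_iff]
  refine ⟨rt m 0, ?_⟩
  rintro ⟨l, hl⟩
  have : l = [] := List.length_eq_zero_iff.mp (Nat.le_zero.mp hl)
  simp [rt, this]

lemma adj_emb (m d : ℕ) (x : Fin m) (u v : Vt m d) :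
    (BalancedTree m (d+1)).Adj (emb m d x u) (emb m d x v) ↔ (BalancedTree m d).Adj u v := by
  simp only [BalancedTree, emb]
  constructor
  · rintro (⟨y, hy⟩ | ⟨y, hy⟩)
    · left; exact ⟨y, by
        have : u.val ++ [x] = (y :: v.val) ++ [x] := by simpa using hy
        exact List.append_cancel_right this⟩
    · right; exact ⟨y, by
        have : v.val ++ [x] = (y :: u.val) ++ [x] := by simpa using hy
        exact List.append_cancel_right this⟩
  · rintro (⟨y, hy⟩ | ⟨y, hy⟩)
    · left; exact ⟨y, by simp [hy]⟩
    · right; exact ⟨y, by simp [hy]⟩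

lemma adj_cases_aux (m d : ℕ) {a b : Vt m (d+1)} {y : Fin m} (hy : a.val = y :: b.val) :
    (b.val = [] ∧ a.val = [y]) ∨
    (∃ x : Fin m, ∃ u v : Vt m d, a = emb m d x u ∧ b = emb m d x v ∧
      (BalancedTree m d).Adj u v) := by
  obtain ⟨la, hla⟩ := a
  obtain ⟨lb, hlb⟩ := b
  simp only at hy
  subst hy
  rcases List.eq_nil_or_concat lb with rfl | ⟨l2, x, rfl⟩
  · exact Or.inl ⟨rfl, rfl⟩
  · right
    have hu : (y :: l2).length ≤ d := by
      have := hla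
      simp at this ⊢
      omega
    have hv : l2.length ≤ d := by
      have := hlb
      simp at this ⊢
      omega
    refine ⟨x, ⟨y :: l2, hu⟩, ⟨l2, hv⟩, ?_, ?_, Or.inl ⟨y, rfl⟩⟩
    · exact Subtype.ext (by simp [emb])
    · exact Subtype.ext (by simp [emb])

lemma adj_cases (m d : ℕ) {a b : Vt m (d+1)} (h : (BalancedTree m (d+1)).Adj a b) :
    (∃ x : Fin m, (a.val = [] ∧ b.val = [x]) ∨ (b.val = [] ∧ a.val = [x])) ∨
    (∃ x : Fin m, ∃ u v : Vt m d, a = emb m d x u ∧ b = emb m d x v ∧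
      (BalancedTree m d).Adj u v) := by
  rcases h with ⟨y, hy⟩ | ⟨y, hy⟩
  · rcases adj_cases_aux m d hy with h1 | ⟨x, u, v, h1, h2, h3⟩
    · exact Or.inl ⟨y, Or.inr h1⟩
    · exact Or.inr ⟨x, u, v, h1, h2, h3⟩
  · rcases adj_cases_aux m d hy with h1 | ⟨x, u, v, h1, h2, h3⟩
    · exact Or.inl ⟨y, Or.inl h1⟩
    · exact Or.inr ⟨x, v, u, h2, h1, h3.symm⟩

end PropAux


namespace PropAux

def zf (m : ℕ) : ℕ → ℕ
  | 0 => 1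
  | 1 => m - 1
  | (d+2) => m^(d+1) * (m-1) + zf m d

lemma zf_cast {m : ℕ} (hm : 1 ≤ m) : ∀ d : ℕ, ((m:ℤ)+1) * zf m d = (m:ℤ)^(d+1) + (-1)^d
  | 0 => by simp [zf]
  | 1 => by
    have : ((m:ℕ) - 1 : ℕ) = (m - 1 : ℤ) := by push_cast [hm]; ring
    simp [zf, this]
    ring
  | (d+2) => by
    have ih := zf_cast hm d
    have hcast : (((m:ℕ) - 1 : ℕ) : ℤ) = (m:ℤ) - 1 := by push_cast [hm]; ring
    show ((m:ℤ)+1) * ((m^(d+1) * (m-1) + zf m d : ℕ) : ℤ) = _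
    push_cast [hcast]
    ring_nf
    ring_nf at ih
    linarith [ih]

lemma zf_succ_int {m : ℕ} (hm : 1 ≤ m) (d : ℕ) :
    (zf m (d+1) : ℤ) = m * zf m d - (-1)^d := by
  have h1 := zf_cast hm d
  have h2 := zf_cast hm (d+1)
  have hne : ((m:ℤ)+1) ≠ 0 := by positivity
  apply mul_left_cancel₀ hne
  calc ((m:ℤ)+1) * (zf m (d+1)) = (m:ℤ)^(d+2) + (-1)^(d+1) := h2
    _ = ((m:ℤ)+1) * ((m:ℤ) * zf m d - (-1)^d) := by
      rw [mul_sub, ← mul_assoc, mul_comm ((m:ℤ)+1) (m:ℤ), mul_assoc, h1]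
      ring

lemma zf_succ_even {m : ℕ} (hm : 1 ≤ m) {d : ℕ} (h : d % 2 = 0) :
    zf m (d+1) + 1 = m * zf m d := by
  have h1 := zf_succ_int hm d
  rw [Nat.even_iff.symm] at h
  rw [h.neg_one_pow] at h1
  have : ((m * zf m d : ℕ) : ℤ) = (m:ℤ) * zf m d := by push_cast; ring
  omega

lemma zf_succ_odd {m : ℕ} (hm : 1 ≤ m) {d : ℕ} (h : d % 2 = 1) :
    zf m (d+1) = m * zf m d + 1 := by
  have h1 := zf_succ_int hm d
  rw [Nat.odd_iff.symm] at h
  rw [h.neg_one_pow] at h1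
  have : ((m * zf m d : ℕ) : ℤ) = (m:ℤ) * zf m d := by push_cast; ring
  omega

end PropAux


namespace PropAux

attribute [local instance] vtFintype

theorem degree2_bound {m : ℕ} (hm : 2 ≤ m) :
    ∀ (d : ℕ) (E : Finset (Vt m d × Vt m d)),
    (∀ p ∈ E, (BalancedTree m d).Adj p.1 p.2) →
    (∀ x, (E.filter (fun p => p.1 = x)).card ≤ 1) →
    (∀ x, (E.filter (fun p => p.2 = x)).card ≤ 1) →
    (∀ p ∈ E, (p.2, p.1) ∉ E) →
    E.card + zf m d ≤ Fintype.card (Vt m d) ∧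
      ((E.filter (fun p => p.1 = rt m d ∨ p.2 = rt m d)).card ≤ 1 →
        E.card + zf m d + d % 2 ≤ Fintype.card (Vt m d))
  | 0 => by
    intro E hadj _ _ _
    have hE : E = ∅ := by
      rw [Finset.eq_empty_iff_forall_notMem]
      intro p hp
      have e1 : p.1.val = [] := List.length_eq_zero_iff.mp (Nat.le_zero.mp p.1.property)
      have e2 : p.2.val = [] := List.length_eq_zero_iff.mp (Nat.le_zero.mp p.2.property)
      rcases hadj p hp with ⟨y, hy⟩ | ⟨y, hy⟩ <;> rw [e1, e2] at hy <;> simp at hy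
    subst hE
    simp [zf, card_vt_zero]
  | (d+1) => by
    intro E hadj hfst hsnd hrev
    classical
    have hm1 : 1 ≤ m := by omega
    set x₀ : Fin m := ⟨0, by omega⟩ with hx₀
    set c : Vt m (d+1) × Vt m (d+1) → Option (Fin m) :=
      fun p => if p.1.val = [] ∨ p.2.val = [] then none else some ((p.1.val.getLast?).getD x₀)
      with hc
    -- structure of none-fiber edges
    have fact1 : ∀ p ∈ E, c p = none →
        ∃ x : Fin m, (p.1.val = [] ∧ p.2.val = [x]) ∨ (p.2.val = [] ∧ p.1.val = [x]) := by
      intro p hp hcp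
      rcases adj_cases m d (hadj p hp) with ⟨x, h⟩ | ⟨x, u, v, h1, h2, _⟩
      · exact ⟨x, h⟩
      · exfalso
        rw [hc] at hcp
        simp only [h1, h2, emb] at hcp
        simp at hcp
    have fact2 : ∀ p ∈ E, ∀ x : Fin m, c p = some x →
        ∃ u v : Vt m d, p.1 = emb m d x u ∧ p.2 = emb m d x v ∧ (BalancedTree m d).Adj u v := by
      intro p hp x hcp
      rcases adj_cases m d (hadj p hp) with ⟨y, h | h⟩ | ⟨y, u, v, h1, h2, h3⟩
      · exfalso; rw [hc] at hcp; simp [h.1] at hcp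
      · exfalso; rw [hc] at hcp; simp [h.1] at hcp
      · have hxy : y = x := by
          rw [hc] at hcp
          simp only [h1, h2, emb] at hcp
          rw [if_neg (by simp)] at hcp
          simpa [List.getLast?_concat] using hcp
        exact ⟨u, v, hxy ▸ h1, hxy ▸ h2, h3⟩
    set En : Finset (Vt m (d+1) × Vt m (d+1)) := E.filter (fun p => c p = none) with hEn
    set Ex : Fin m → Finset (Vt m (d+1) × Vt m (d+1)) :=
      fun x => E.filter (fun p => c p = some x) with hEx
    have hcardsum : E.card = En.card + ∑ x : Fin m, (Ex x).card := by
      have h := Finset.card_eq_sum_card_fiberwise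
        (f := c) (s := E) (t := Finset.univ) (fun x _ => Finset.mem_univ _)
      rw [h, Fintype.sum_option]
    -- the embedded subtree edge sets
    have hinj : ∀ x : Fin m, Function.Injective
        (fun q : Vt m d × Vt m d => (emb m d x q.1, emb m d x q.2)) := by
      intro x q r h
      rw [Prod.ext_iff] at h ⊢
      exact ⟨emb_injective m d x h.1, emb_injective m d x h.2⟩
    set ϕ : Fin m → (Vt m d × Vt m d) → (Vt m (d+1) × Vt m (d+1)) :=
      fun x q => (emb m d x q.1, emb m d x q.2) with hϕ
    set Px : Fin m → Finset (Vt m d × Vt m d) :=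
      fun x => (Ex x).preimage (ϕ x) ((hinj x).injOn) with hPx
    have hmemPx : ∀ x q, q ∈ Px x ↔ ϕ x q ∈ Ex x := by
      intro x q
      rw [hPx]
      exact Finset.mem_preimage
    have himg : ∀ x, (Px x).image (ϕ x) = Ex x := by
      intro x
      apply Finset.Subset.antisymm
      · intro p hp
        obtain ⟨q, hq, rfl⟩ := Finset.mem_image.mp hp
        exact (hmemPx x q).mp hq
      · intro p hp
        have hpE : p ∈ E := (Finset.mem_filter.mp hp).1
        have hpc : c p = some x := (Finset.mem_filter.mp hp).2
        obtain ⟨u, v, h1, h2, _⟩ := fact2 p hpE x hpc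
        refine Finset.mem_image.mpr ⟨(u, v), ?_, ?_⟩
        · rw [hmemPx]
          have : ϕ x (u, v) = p := by
            rw [hϕ]; dsimp; rw [← h1, ← h2]
          rw [this]; exact hp
        · rw [hϕ]; dsimp; rw [← h1, ← h2]
    have hcardPx : ∀ x, (Px x).card = (Ex x).card := by
      intro x
      rw [← himg x, Finset.card_image_of_injective _ (hinj x)]

    -- IH hypotheses for the pulled-back edge sets
    have hPadj : ∀ x, ∀ q ∈ Px x, (BalancedTree m d).Adj q.1 q.2 := by
      intro x q hq
      have hqE : ϕ x q ∈ E := (Finset.mem_filter.mp ((hmemPx x q).mp hq)).1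
      have h := hadj _ hqE
      rw [hϕ] at h
      exact (adj_emb m d x q.1 q.2).mp h
    have hPfst : ∀ x u, ((Px x).filter (fun q => q.1 = u)).card ≤ 1 := by
      intro x u
      have hsub : ((Px x).filter (fun q => q.1 = u)).image (ϕ x)
          ⊆ E.filter (fun p => p.1 = emb m d x u) := by
        intro p hp
        obtain ⟨q, hq, rfl⟩ := Finset.mem_image.mp hp
        obtain ⟨hq1, hq2⟩ := Finset.mem_filter.mp hq
        refine Finset.mem_filter.mpr ⟨(Finset.mem_filter.mp ((hmemPx x q).mp hq1)).1, ?_⟩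
        rw [hϕ]; dsimp; rw [hq2]
      calc ((Px x).filter (fun q => q.1 = u)).card
          = (((Px x).filter (fun q => q.1 = u)).image (ϕ x)).card :=
            (Finset.card_image_of_injective _ (hinj x)).symm
        _ ≤ (E.filter (fun p => p.1 = emb m d x u)).card := Finset.card_le_card hsub
        _ ≤ 1 := hfst _
    have hPsnd : ∀ x u, ((Px x).filter (fun q => q.2 = u)).card ≤ 1 := by
      intro x u
      have hsub : ((Px x).filter (fun q => q.2 = u)).image (ϕ x)
          ⊆ E.filter (fun p => p.2 = emb m d x u) := by
        intro p hp
        obtain ⟨q, hq, rfl⟩ := Finset.mem_image.mp hp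
        obtain ⟨hq1, hq2⟩ := Finset.mem_filter.mp hq
        refine Finset.mem_filter.mpr ⟨(Finset.mem_filter.mp ((hmemPx x q).mp hq1)).1, ?_⟩
        rw [hϕ]; dsimp; rw [hq2]
      calc ((Px x).filter (fun q => q.2 = u)).card
          = (((Px x).filter (fun q => q.2 = u)).image (ϕ x)).card :=
            (Finset.card_image_of_injective _ (hinj x)).symm
        _ ≤ (E.filter (fun p => p.2 = emb m d x u)).card := Finset.card_le_card hsub
        _ ≤ 1 := hsnd _
    have hPrev : ∀ x, ∀ q ∈ Px x, (q.2, q.1) ∉ Px x := by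
      intro x q hq hq'
      have h1 : ϕ x q ∈ E := (Finset.mem_filter.mp ((hmemPx x q).mp hq)).1
      have h2 : ϕ x (q.2, q.1) ∈ E := (Finset.mem_filter.mp ((hmemPx x _).mp hq')).1
      exact hrev _ h1 h2
    -- the set of children receiving a root edge
    set g : Vt m (d+1) × Vt m (d+1) → Fin m :=
      fun p => ((p.1.val ++ p.2.val).getLast?).getD x₀ with hg
    have hgshape : ∀ p ∈ En, ∃ x : Fin m,
        ((p.1.val = [] ∧ p.2.val = [x]) ∨ (p.2.val = [] ∧ p.1.val = [x])) ∧ g p = x := by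
      intro p hp
      obtain ⟨hpE, hpc⟩ := Finset.mem_filter.mp hp
      obtain ⟨x, hx⟩ := fact1 p hpE hpc
      refine ⟨x, hx, ?_⟩
      rcases hx with ⟨h1, h2⟩ | ⟨h1, h2⟩ <;> rw [hg] <;> dsimp <;> rw [h1, h2] <;> simp
    have hginj : Set.InjOn g En := by
      intro p hp q hq hpq
      obtain ⟨x, hxp, hgp⟩ := hgshape p hp
      obtain ⟨y, hxq, hgq⟩ := hgshape q hq
      have hxy : x = y := by rw [← hgp, ← hgq, hpq]
      subst hxy
      have hpE : p ∈ E := (Finset.mem_filter.mp hp).1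
      have hqE : q ∈ E := (Finset.mem_filter.mp hq).1
      rcases hxp with ⟨h1, h2⟩ | ⟨h1, h2⟩ <;> rcases hxq with ⟨h3, h4⟩ | ⟨h3, h4⟩ <;>
        first
        | exact Prod.ext (Subtype.ext (h1.trans h3.symm)) (Subtype.ext (h2.trans h4.symm))
        | exact Prod.ext (Subtype.ext (h2.trans h4.symm)) (Subtype.ext (h1.trans h3.symm))
        | (exfalso
           refine hrev p hpE ?_
           have heq : (p.2, p.1) = q := by
             first
             | exact Prod.ext (Subtype.ext (h2.trans h4.symm)) (Subtype.ext (h1.trans h3.symm))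
             | exact Prod.ext (Subtype.ext (h1.trans h3.symm)) (Subtype.ext (h2.trans h4.symm))
           exact heq ▸ hqE)
    set X : Finset (Fin m) := En.image g with hX
    have hXcard : X.card = En.card := Finset.card_image_of_injOn hginj
    -- En is exactly the set of edges touching the root
    have hEnchar : En = E.filter (fun p => p.1 = rt m (d+1) ∨ p.2 = rt m (d+1)) := by
      ext p
      rw [hEn, Finset.mem_filter, Finset.mem_filter]
      constructor
      · rintro ⟨hpE, hpc⟩
        obtain ⟨x, hx⟩ := fact1 p hpE hpc
        rcases hx with ⟨h1, _⟩ | ⟨h1, _⟩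
        · exact ⟨hpE, Or.inl (Subtype.ext h1)⟩
        · exact ⟨hpE, Or.inr (Subtype.ext h1)⟩
      · rintro ⟨hpE, h | h⟩
        · refine ⟨hpE, ?_⟩
          rw [hc]; dsimp
          rw [if_pos (Or.inl (by rw [h]; rfl))]
        · refine ⟨hpE, ?_⟩
          rw [hc]; dsimp
          rw [if_pos (Or.inr (by rw [h]; rfl))]
    have hEn2 : En.card ≤ 2 := by
      have hsub : En ⊆ E.filter (fun p => p.1 = rt m (d+1)) ∪ E.filter (fun p => p.2 = rt m (d+1)) := by
        rw [hEnchar]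
        intro p hp
        obtain ⟨hpE, h | h⟩ := Finset.mem_filter.mp hp
        · exact Finset.mem_union_left _ (Finset.mem_filter.mpr ⟨hpE, h⟩)
        · exact Finset.mem_union_right _ (Finset.mem_filter.mpr ⟨hpE, h⟩)
      calc En.card ≤ _ := Finset.card_le_card hsub
        _ ≤ (E.filter (fun p => p.1 = rt m (d+1))).card
            + (E.filter (fun p => p.2 = rt m (d+1))).card := Finset.card_union_le _ _
        _ ≤ 2 := by
            have h1 := hfst (rt m (d+1))
            have h2 := hsnd (rt m (d+1))
            omega
    -- if a child gets a root edge, its subtree uses the root slot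
    have hroot : ∀ x ∈ X, ((Px x).filter (fun q => q.1 = rt m d ∨ q.2 = rt m d)).card ≤ 1 := by
      intro x hx
      obtain ⟨p₀, hp₀, hgp₀⟩ := Finset.mem_image.mp hx
      obtain ⟨x', hshape, hgp'⟩ := hgshape p₀ hp₀
      have hx'eq : x' = x := hgp'.symm.trans hgp₀
      rw [hx'eq] at hshape
      have hp₀E : p₀ ∈ E := (Finset.mem_filter.mp hp₀).1
      set A := E.filter (fun p => p.1 = emb m d x (rt m d) ∨ p.2 = emb m d x (rt m d)) with hA
      have hAcard : A.card ≤ 2 := by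
        have hsub : A ⊆ E.filter (fun p => p.1 = emb m d x (rt m d))
            ∪ E.filter (fun p => p.2 = emb m d x (rt m d)) := by
          intro p hp
          obtain ⟨hpE, h | h⟩ := Finset.mem_filter.mp hp
          · exact Finset.mem_union_left _ (Finset.mem_filter.mpr ⟨hpE, h⟩)
          · exact Finset.mem_union_right _ (Finset.mem_filter.mpr ⟨hpE, h⟩)
        calc A.card ≤ _ := Finset.card_le_card hsub
          _ ≤ _ + _ := Finset.card_union_le _ _
          _ ≤ 2 := by
              have h1 := hfst (emb m d x (rt m d))
              have h2 := hsnd (emb m d x (rt m d))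
              omega
      have hp₀A : p₀ ∈ A := by
        rcases hshape with ⟨h1, h2⟩ | ⟨h1, h2⟩
        · exact Finset.mem_filter.mpr ⟨hp₀E, Or.inr (Subtype.ext (by rw [h2]; simp [emb, rt]))⟩
        · exact Finset.mem_filter.mpr ⟨hp₀E, Or.inl (Subtype.ext (by rw [h2]; simp [emb, rt]))⟩
      have hsub : ((Px x).filter (fun q => q.1 = rt m d ∨ q.2 = rt m d)).image (ϕ x)
          ⊆ A.erase p₀ := by
        intro p hp
        obtain ⟨q, hq, rfl⟩ := Finset.mem_image.mp hp
        obtain ⟨hq1, hq2⟩ := Finset.mem_filter.mp hq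
        have hqE : ϕ x q ∈ E := (Finset.mem_filter.mp ((hmemPx x q).mp hq1)).1
        refine Finset.mem_erase.mpr ⟨?_, Finset.mem_filter.mpr ⟨hqE, ?_⟩⟩
        · intro hcontra
          rcases hshape with ⟨h1, _⟩ | ⟨h1, _⟩
          · have : (ϕ x q).1.val = [] := by rw [hcontra, h1]
            rw [hϕ] at this
            simp [emb] at this
          · have : (ϕ x q).2.val = [] := by rw [hcontra, h1]
            rw [hϕ] at this
            simp [emb] at this
        · rcases hq2 with h | h
          · exact Or.inl (by rw [hϕ]; dsimp; rw [h])
          · exact Or.inr (by rw [hϕ]; dsimp; rw [h])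
      calc ((Px x).filter (fun q => q.1 = rt m d ∨ q.2 = rt m d)).card
          = (((Px x).filter (fun q => q.1 = rt m d ∨ q.2 = rt m d)).image (ϕ x)).card :=
            (Finset.card_image_of_injective _ (hinj x)).symm
        _ ≤ (A.erase p₀).card := Finset.card_le_card hsub
        _ = A.card - 1 := Finset.card_erase_of_mem hp₀A
        _ ≤ 1 := by omega
    -- combine via the inductive hypothesis
    have hper : ∀ x : Fin m, (Px x).card + zf m d + (if x ∈ X then d % 2 else 0)
        ≤ Fintype.card (Vt m d) := by
      intro x
      have IH := degree2_bound hm d (Px x) (hPadj x) (hPfst x) (hPsnd x) (hPrev x)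
      by_cases hx : x ∈ X
      · simpa [hx] using IH.2 (hroot x hx)
      · simpa [hx] using IH.1
    have hsum : (∑ x : Fin m, (Px x).card) + m * zf m d + X.card * (d % 2)
        ≤ m * Fintype.card (Vt m d) := by
      have h1 : ∑ x : Fin m, ((Px x).card + zf m d + (if x ∈ X then d % 2 else 0))
          ≤ ∑ _x : Fin m, Fintype.card (Vt m d) :=
        Finset.sum_le_sum (fun x _ => hper x)
      rw [Finset.sum_add_distrib, Finset.sum_add_distrib, Finset.sum_const, Finset.sum_const] at h1
      have h2 : ∑ x : Fin m, (if x ∈ X then d % 2 else 0) = X.card * (d % 2) := by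
        rw [Finset.sum_ite_mem, Finset.univ_inter, Finset.sum_const, smul_eq_mul]
      rw [h2] at h1
      simpa [Finset.card_univ, mul_comm] using h1
    have hsum2 : ∑ x : Fin m, (Ex x).card = ∑ x : Fin m, (Px x).card :=
      Finset.sum_congr rfl (fun x _ => (hcardPx x).symm)
    rw [hXcard] at hsum
    constructor
    · rw [hcardsum, hsum2, card_vt_succ]
      rcases Nat.mod_two_eq_zero_or_one d with hd | hd
      · have hz := zf_succ_even hm1 hd
        rw [hd, Nat.mul_zero, Nat.add_zero] at hsum
        generalize hA : m * Fintype.card (Vt m d) = A at hsum ⊢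
        generalize hB : m * zf m d = B at hsum hz
        omega
      · have hz := zf_succ_odd hm1 hd
        rw [hd, Nat.mul_one] at hsum
        generalize hA : m * Fintype.card (Vt m d) = A at hsum ⊢
        generalize hB : m * zf m d = B at hsum hz
        omega
    · rw [← hEnchar]
      intro hEn1
      rw [hcardsum, hsum2, card_vt_succ]
      rcases Nat.mod_two_eq_zero_or_one d with hd | hd
      · have hz := zf_succ_even hm1 hd
        have hd1 : (d + 1) % 2 = 1 := by omega
        rw [hd, Nat.mul_zero, Nat.add_zero] at hsum
        rw [hd1]
        generalize hA : m * Fintype.card (Vt m d) = A at hsum ⊢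
        generalize hB : m * zf m d = B at hsum hz
        omega
      · have hz := zf_succ_odd hm1 hd
        have hd1 : (d + 1) % 2 = 0 := by omega
        rw [hd, Nat.mul_one] at hsum
        rw [hd1]
        generalize hA : m * Fintype.card (Vt m d) = A at hsum ⊢
        generalize hB : m * zf m d = B at hsum hz
        omega

end PropAux

namespace PropAux

attribute [local instance] vtFintype

variable {m d : ℕ}

def predP (m d : ℕ) (v : Vt m d) : Prop :=
  (d - v.val.length) % 2 = 0 ∧ ∀ a ∈ v.val.head?, (a : ℕ) ≠ 0

instance : DecidablePred (predP m d) := fun v => by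
  unfold predP; infer_instance

lemma reach_U (hm : 2 ≤ m) :
    ∀ k, ∀ v : Vt m d, d - v.val.length = k → k % 2 = 1 →
      PropReach (BalancedTree m d) {v | predP m d v} v := by
  intro k
  induction k using Nat.strong_induction_on with
  | _ k ih =>
    intro v hk hodd
    have hlen : v.val.length < d := by
      have := v.property; omega
    have hc1 : ((⟨1, by omega⟩ : Fin m) :: v.val).length ≤ d := by
      simp; omega
    set c : Vt m d := ⟨(⟨1, by omega⟩ : Fin m) :: v.val, hc1⟩ with hcdef
    have hcS : c ∈ {v | predP m d v} := by
      refine ⟨?_, ?_⟩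
      · show (d - ((⟨1, by omega⟩ : Fin m) :: v.val).length) % 2 = 0
        simp only [List.length_cons]
        omega
      · show ∀ a ∈ ((⟨1, by omega⟩ : Fin m) :: v.val).head?, (a : ℕ) ≠ 0
        intro a ha
        simp only [List.head?_cons, Option.mem_def, Option.some.injEq] at ha
        rw [← ha]
        simp
    refine PropReach.step (PropReach.base hcS) (Or.inl ⟨_, rfl⟩) ?_
    intro u hadj hne
    rcases hadj with ⟨y, hy⟩ | ⟨y, hy⟩
    · -- c.val = y :: u.val, so u = v
      exfalso
      apply hne
      apply Subtype.ext
      have h' : ((⟨1, by omega⟩ : Fin m) : Fin m) :: v.val = y :: u.val := hy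
      have := congrArg List.tail h'
      simpa using this.symm
    · -- u is a child of c
      have hul : u.val.length = v.val.length + 2 := by
        rw [hy]; simp [hcdef]
      have hud : u.val.length ≤ d := u.property
      exact ih (k - 2) (by omega) u (by omega) (by omega)

lemma reach_W (hm : 2 ≤ m) :
    ∀ n, ∀ v : Vt m d, v.val.length = n → (d - n) % 2 = 0 →
      PropReach (BalancedTree m d) {v | predP m d v} v := by
  intro n
  induction n using Nat.strong_induction_on with
  | _ n ih =>
    intro v hn hpar
    by_cases hhead : ∀ a ∈ v.val.head?, (a : ℕ) ≠ 0
    · exact PropReach.base ⟨by rw [hn]; exact hpar, hhead⟩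
    · push_neg at hhead
      obtain ⟨a, ha, ha0⟩ := hhead
      obtain ⟨t, hv⟩ : ∃ t, v.val = a :: t := by
        cases hvv : v.val with
        | nil => rw [hvv] at ha; simp at ha
        | cons b t =>
          rw [hvv] at ha
          simp only [List.head?_cons, Option.mem_def, Option.some.injEq] at ha
          exact ⟨t, by rw [ha]⟩
      have hn1 : n = t.length + 1 := by rw [← hn, hv]; simp
      have htd : t.length ≤ d := by have := v.property; omega
      set P : Vt m d := ⟨t, htd⟩ with hPdef
      have hPreach : PropReach (BalancedTree m d) {v | predP m d v} P :=
        reach_U hm (d - t.length) P rfl (by omega)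
      refine PropReach.step hPreach (Or.inr ⟨a, by rw [hv]⟩) ?_
      intro u hadj hne
      rcases hadj with ⟨y, hy⟩ | ⟨y, hy⟩
      · -- P.val = y :: u.val : grandparent
        have hul : u.val.length + 1 = t.length := by
          have := congrArg List.length hy
          simp [hPdef] at this
          omega
        exact ih (n - 2) (by omega) u (by omega) (by omega)
      · -- u.val = y :: t : sibling of v (or v itself)
        by_cases hy0 : (y : ℕ) = 0
        · exfalso
          apply hne
          apply Subtype.ext
          rw [hy, hv]
          congr 1
          exact Fin.ext (by rw [hy0, ha0])
        · refine PropReach.base ⟨?_, ?_⟩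
          · have : u.val.length = n := by rw [hy]; simp [hn1, hPdef]
            rw [this]; exact hpar
          · intro b hb
            rw [hy] at hb
            simp only [List.head?_cons, Option.mem_def, Option.some.injEq] at hb
            rw [← hb]; exact hy0

lemma propagates_Sd (hm : 2 ≤ m) :
    Propagates (BalancedTree m d) {v | predP m d v} := by
  intro v
  rcases Nat.mod_two_eq_zero_or_one (d - v.val.length) with h | h
  · exact reach_W hm v.val.length v rfl h
  · exact reach_U hm (d - v.val.length) v rfl h

end PropAux

namespace PropAux

attribute [local instance] vtFintype

variable {m : ℕ}

lemma pred_root (d : ℕ) : predP m d (rt m d) ↔ d % 2 = 0 := by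
  unfold predP rt
  simp

lemma pred_emb_ne {d : ℕ} (x : Fin m) (hx : (x : ℕ) ≠ 0) (u : Vt m d) :
    predP m (d+1) (emb m d x u) ↔ predP m d u := by
  obtain ⟨l, hl⟩ := u
  unfold predP emb
  cases l with
  | nil => simp [hx]
  | cons b t =>
    simp only [List.cons_append, List.head?_cons, List.length_append, List.length_cons,
      List.length_nil]
    constructor
    · rintro ⟨h1, h2⟩
      exact ⟨by omega, h2⟩
    · rintro ⟨h1, h2⟩
      exact ⟨by omega, h2⟩

lemma pred_emb_zero {d : ℕ} (x : Fin m) (hx : (x : ℕ) = 0) (u : Vt m d) :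
    predP m (d+1) (emb m d x u) ↔ (predP m d u ∧ u ≠ rt m d) := by
  obtain ⟨l, hl⟩ := u
  unfold predP emb rt
  cases l with
  | nil =>
    simp only [List.nil_append, List.head?_cons, List.length_cons, List.length_nil]
    constructor
    · rintro ⟨h1, h2⟩
      exact absurd hx (h2 x rfl)
    · rintro ⟨⟨h1, h2⟩, hne⟩
      exact absurd (Subtype.ext rfl) hne
  | cons b t =>
    simp only [List.cons_append, List.head?_cons, List.length_append, List.length_cons,
      List.length_nil]
    constructor
    · rintro ⟨h1, h2⟩
      refine ⟨⟨by omega, h2⟩, by simp [Subtype.ext_iff]⟩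
    · rintro ⟨⟨h1, h2⟩, hne⟩
      exact ⟨by omega, h2⟩

lemma card_Sd (hm : 2 ≤ m) : ∀ d, (Finset.univ.filter (predP m d)).card = zf m d := by
  intro d
  induction d with
  | zero =>
    have hall : Finset.univ.filter (predP m 0) = Finset.univ := by
      apply Finset.filter_true_of_mem
      intro v _
      obtain ⟨l, hl⟩ := v
      have hnil : l = [] := List.length_eq_zero_iff.mp (Nat.le_zero.mp hl)
      subst hnil
      exact ⟨by simp, by simp⟩
    rw [hall, Finset.card_univ, card_vt_zero]
    rfl
  | succ d ih =>
    classical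
    set x₀ : Fin m := ⟨0, by omega⟩ with hx₀
    set F : Fin m → ℕ :=
      (fun x => ∑ u : Vt m d, if predP m (d+1) (emb m d x u) then 1 else 0) with hF
    have hroot : (if predP m (d+1) (rt m (d+1)) then (1:ℕ) else 0)
        = (if (d+1) % 2 = 0 then 1 else 0) := by
      by_cases h : (d+1) % 2 = 0
      · rw [if_pos ((pred_root (d+1)).mpr h), if_pos h]
      · rw [if_neg (fun hc => h ((pred_root (d+1)).mp hc)), if_neg h]
    have step2 : (Finset.univ.filter (predP m (d+1))).card
        = (if (d+1) % 2 = 0 then (1:ℕ) else 0) + ∑ x : Fin m, F x := by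
      rw [Finset.card_filter,
        ← Equiv.sum_comp (treeEquiv m d) (fun v => if predP m (d+1) v then (1:ℕ) else 0),
        Fintype.sum_option, Fintype.sum_prod_type, ← hroot]
      rfl
    have hFne : ∀ x : Fin m, x ≠ x₀ → F x = zf m d := by
      intro x hx
      have hxv : (x : ℕ) ≠ 0 := fun hc => hx (Fin.ext hc)
      rw [hF]
      dsimp only
      rw [← ih, Finset.card_filter]
      apply Finset.sum_congr rfl
      intro u _
      simp only [pred_emb_ne x hxv u]
    have hF0 : F x₀ + (if d % 2 = 0 then 1 else 0) = zf m d := by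
      have h1 : ∀ u : Vt m d, (if predP m (d+1) (emb m d x₀ u) then (1:ℕ) else 0)
          = (if (predP m d u ∧ u ≠ rt m d) then 1 else 0) := by
        intro u
        simp only [pred_emb_zero x₀ rfl u]
      rw [hF]
      dsimp only
      simp only [h1]
      rw [← Finset.card_filter]
      have h2 : Finset.univ.filter (fun u => predP m d u ∧ u ≠ rt m d)
          = (Finset.univ.filter (predP m d)).erase (rt m d) := by
        ext u
        simp only [Finset.mem_filter, Finset.mem_erase, Finset.mem_univ, true_and]
        tauto
      rw [h2]
      by_cases hd : d % 2 = 0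
      · have hrt : rt m d ∈ Finset.univ.filter (predP m d) := by
          simp only [Finset.mem_filter, Finset.mem_univ, true_and]
          exact (pred_root d).mpr hd
        have hpos : 0 < (Finset.univ.filter (predP m d)).card := Finset.card_pos.mpr ⟨rt m d, hrt⟩
        rw [Finset.card_erase_of_mem hrt, if_pos hd, ← ih]
        omega
      · have hrt : rt m d ∉ Finset.univ.filter (predP m d) := by
          simp only [Finset.mem_filter, Finset.mem_univ, true_and]
          exact fun hc => hd ((pred_root d).mp hc)
        rw [Finset.erase_eq_of_notMem hrt, if_neg hd, Nat.add_zero, ih]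
    have hsplit : ∑ x : Fin m, F x = (m - 1) * zf m d + F x₀ := by
      rw [← Finset.sum_erase_add Finset.univ _ (Finset.mem_univ x₀)]
      congr 1
      rw [Finset.sum_congr rfl (fun x hx => hFne x (Finset.mem_erase.mp hx).1)]
      rw [Finset.sum_const, Finset.card_erase_of_mem (Finset.mem_univ x₀), Finset.card_univ,
        Fintype.card_fin, smul_eq_mul]
    rw [step2, hsplit]
    have hmz : (m - 1) * zf m d + zf m d = m * zf m d := by
      have h : (m - 1) + 1 = m := by omega
      calc (m - 1) * zf m d + zf m d = ((m - 1) + 1) * zf m d := by ring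
        _ = m * zf m d := by rw [h]
    rcases Nat.mod_two_eq_zero_or_one d with hd | hd
    · have hz := zf_succ_even (by omega : 1 ≤ m) hd
      have hd1 : ¬ (d+1) % 2 = 0 := by omega
      rw [if_pos hd] at hF0
      rw [if_neg hd1]
      generalize hZ : zf m d = Z at hF0 hmz hz
      generalize hW : zf m (d+1) = W at hz ⊢
      generalize hA : m * Z = A at hmz hz
      generalize hC : (m - 1) * Z = C at hmz ⊢
      omega
    · have hz := zf_succ_odd (by omega : 1 ≤ m) hd
      have hd1 : (d+1) % 2 = 0 := by omega
      rw [if_neg (by omega : ¬ d % 2 = 0)] at hF0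
      rw [if_pos hd1]
      generalize hZ : zf m d = Z at hF0 hmz hz
      generalize hW : zf m (d+1) = W at hz ⊢
      generalize hA : m * Z = A at hmz hz
      generalize hC : (m - 1) * Z = C at hmz ⊢
      omega

end PropAux


private lemma rowsum_adj (m : ℕ) (i : Fin (m+1)) :
    ∑ l, (SimpleGraph.adjMatrix ℤ (⊤ : SimpleGraph (Fin (m+1)))) i l = m := by
  classical
  simp [SimpleGraph.adjMatrix_apply, Finset.sum_ite, Finset.filter_ne, Finset.card_erase_of_mem]

private lemma rowsum_pow (m k : ℕ) (i : Fin (m+1)) :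
    ∑ l, ((SimpleGraph.adjMatrix ℤ (⊤ : SimpleGraph (Fin (m+1)))) ^ k) i l = (m:ℤ)^k := by
  classical
  induction k generalizing i with
  | zero => simp [Matrix.one_apply, Finset.sum_ite_eq]
  | succ k ih =>
    have : ∀ l, ((SimpleGraph.adjMatrix ℤ (⊤ : SimpleGraph (Fin (m+1)))) ^ (k+1)) i l
        = ∑ t, ((SimpleGraph.adjMatrix ℤ (⊤ : SimpleGraph (Fin (m+1)))) ^ k) i t *
            (SimpleGraph.adjMatrix ℤ (⊤ : SimpleGraph (Fin (m+1)))) t l := by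
      intro l; rw [pow_succ, Matrix.mul_apply]
    simp only [this]
    rw [Finset.sum_comm]
    have : ∀ t, ∑ l, ((SimpleGraph.adjMatrix ℤ (⊤ : SimpleGraph (Fin (m+1)))) ^ k) i t *
        (SimpleGraph.adjMatrix ℤ (⊤ : SimpleGraph (Fin (m+1)))) t l
        = ((SimpleGraph.adjMatrix ℤ (⊤ : SimpleGraph (Fin (m+1)))) ^ k) i t * m := by
      intro t; rw [← Finset.mul_sum, rowsum_adj]
    simp only [this]
    rw [← Finset.sum_mul, ih, pow_succ]

private lemma entry_pow (m k : ℕ) (i j : Fin (m+1)) (hij : i ≠ j) :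
    ((m:ℤ)+1) * ((SimpleGraph.adjMatrix ℤ (⊤ : SimpleGraph (Fin (m+1)))) ^ k) i j
      = (m:ℤ)^k - (-1)^k := by
  classical
  induction k with
  | zero => simp [Matrix.one_apply, hij]
  | succ k ih =>
    have h1 : ((SimpleGraph.adjMatrix ℤ (⊤ : SimpleGraph (Fin (m+1)))) ^ (k+1)) i j
        = ∑ l, ((SimpleGraph.adjMatrix ℤ (⊤ : SimpleGraph (Fin (m+1)))) ^ k) i l *
            (SimpleGraph.adjMatrix ℤ (⊤ : SimpleGraph (Fin (m+1)))) l j := by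
      rw [pow_succ, Matrix.mul_apply]
    have h2 : ∑ l, ((SimpleGraph.adjMatrix ℤ (⊤ : SimpleGraph (Fin (m+1)))) ^ k) i l *
            (SimpleGraph.adjMatrix ℤ (⊤ : SimpleGraph (Fin (m+1)))) l j
        = (∑ l, ((SimpleGraph.adjMatrix ℤ (⊤ : SimpleGraph (Fin (m+1)))) ^ k) i l)
          - ((SimpleGraph.adjMatrix ℤ (⊤ : SimpleGraph (Fin (m+1)))) ^ k) i j := by
      rw [← Finset.sum_erase_eq_sub (Finset.mem_univ j)]
      rw [← Finset.sum_erase (Finset.univ) (f := fun l =>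
        ((SimpleGraph.adjMatrix ℤ (⊤ : SimpleGraph (Fin (m+1)))) ^ k) i l *
            (SimpleGraph.adjMatrix ℤ (⊤ : SimpleGraph (Fin (m+1)))) l j) (a := j) (by simp)]
      apply Finset.sum_congr rfl
      intro l hl
      have hlj : l ≠ j := (Finset.mem_erase.mp hl).1
      simp [SimpleGraph.adjMatrix_apply, hlj]
    rw [h1, h2, rowsum_pow, mul_sub, ih]
    ring


private lemma cast_entry (m k : ℕ) (i j : Fin (m+1)) :
    (((SimpleGraph.adjMatrix ℕ (⊤ : SimpleGraph (Fin (m+1)))) ^ k) i j : ℤ)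
      = ((SimpleGraph.adjMatrix ℤ (⊤ : SimpleGraph (Fin (m+1)))) ^ k) i j := by
  classical
  have h : (SimpleGraph.adjMatrix ℤ (⊤ : SimpleGraph (Fin (m+1))))
      = (Nat.castRingHom ℤ).mapMatrix ((SimpleGraph.adjMatrix ℕ (⊤ : SimpleGraph (Fin (m+1))))) := by
    ext a b
    simp [SimpleGraph.adjMatrix_apply, RingHom.mapMatrix_apply, Matrix.map_apply]
  rw [h, ← map_pow]
  simp [RingHom.mapMatrix_apply, Matrix.map_apply]


namespace PropAux

attribute [local instance] vtFintype

lemma zf_le_ncard {m d : ℕ} (hm : 2 ≤ m) {S : Set (Vt m d)}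
    (hS : Propagates (BalancedTree m d) S) : zf m d ≤ S.ncard := by
  classical
  obtain ⟨E, hadj, hfst, hsnd, hrev, hcard⟩ := lower_core (G := BalancedTree m d) hS
  have hb := (degree2_bound hm d E hadj hfst hsnd hrev).1
  have h1 : Nat.card (Vt m d) = S.ncard + E.card := by
    rw [Nat.card_eq_fintype_card]; exact hcard
  have h2 : E.card + zf m d ≤ Nat.card (Vt m d) := by
    rw [Nat.card_eq_fintype_card]; exact hb
  omega

theorem propNum_balanced {m : ℕ} (hm : 2 ≤ m) (d : ℕ) :
    propNum (BalancedTree m d) = zf m d := by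
  classical
  have hmem : zf m d ∈ {n | ∃ S : Set (Vt m d), S.ncard = n ∧ Propagates (BalancedTree m d) S} := by
    refine ⟨{v | predP m d v}, ?_, propagates_Sd hm⟩
    have hset : {v : Vt m d | predP m d v}
        = ((Finset.univ.filter (predP m d) : Finset (Vt m d)) : Set (Vt m d)) := by
      ext v; simp
    rw [hset, Set.ncard_coe_finset, card_Sd hm d]
  apply le_antisymm
  · exact Nat.sInf_le hmem
  · refine le_csInf ⟨_, hmem⟩ ?_
    rintro n ⟨S, rfl, hS⟩
    exact zf_le_ncard hm hS

end PropAux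


/-- For `m, k ≥ 1` and distinct vertices `i ≠ j` of the complete graph
`K_{m+1}`, the number of walks of length `k` from `i` to `j` — the `(i,j)` entry of the
`k`-th power of the adjacency matrix — equals `(m^k + (-1)^(k-1))/(m+1)`, stated
multiplicatively over `ℤ`; in particular, for `m ≥ 2` it equals `π` of the balanced `m`-ary
tree with `k` levels (depth `k - 1`). -/
theorem adjMatrix_pow_completeGraph_eq_propNum (m k : ℕ) (hm : 1 ≤ m) (hk : 1 ≤ k)
    (i j : Fin (m + 1)) (hij : i ≠ j) :
    ((m : ℤ) + 1) * ((SimpleGraph.adjMatrix ℤ (⊤ : SimpleGraph (Fin (m + 1)))) ^ k) i j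
        = (m : ℤ) ^ k + (-1) ^ (k - 1) ∧
    (2 ≤ m →
      ((SimpleGraph.adjMatrix ℕ (⊤ : SimpleGraph (Fin (m + 1)))) ^ k) i j
        = propNum (BalancedTree m (k - 1))) := by
  obtain ⟨s, rfl⟩ : ∃ s, k = s + 1 := ⟨k - 1, by omega⟩
  have hsign : (m:ℤ)^(s+1) - (-1)^(s+1) = (m:ℤ)^(s+1) + (-1)^((s+1) - 1) := by
    simp [pow_succ]
  have h1 := entry_pow m (s+1) i j hij
  constructor
  · rw [h1, hsign]
  · intro hm2
    have h3 := PropAux.zf_cast (by omega : 1 ≤ m) s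
    have h2 := cast_entry m (s+1) i j
    have hz : (((SimpleGraph.adjMatrix ℕ (⊤ : SimpleGraph (Fin (m + 1)))) ^ (s+1)) i j : ℤ)
        = (PropAux.zf m s : ℤ) := by
      have hne : ((m:ℤ)+1) ≠ 0 := by positivity
      apply mul_left_cancel₀ hne
      rw [h2, h1, h3, pow_succ]
      ring
    have hzn : ((SimpleGraph.adjMatrix ℕ (⊤ : SimpleGraph (Fin (m + 1)))) ^ (s+1)) i j
        = PropAux.zf m s := Int.ofNat_inj.mp hz
    rw [hzn, PropAux.propNum_balanced hm2]
    congr 1
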